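/- Let λ₁, …, λₙ > 0 satisfy ∑ᵢ λᵢ ≤ n. Then ∑ᵢ (−log λᵢ) ≥ (1/(2n²)) · ∑ᵢ (λᵢ − 1)². -/

import Mathlib

open Real Set

private lemma hasDerivA (x : ℝ) (hx : 0 < x) :
    HasDerivAt (fun s : ℝ => -Real.log s - (1 - s) - (s - 1) ^ 2 / 2)
      (-x⁻¹ + 1 - (x - 1)) x := by
  have h1 : HasDerivAt (fun s : ℝ => -Real.log s) (-x⁻¹) x :=
    ((Real.hasDerivAt_log hx.ne').neg)
  have h2 : HasDerivAt (fun s : ℝ => (1 - s)) (-1) x := by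
    simpa using (hasDerivAt_id x).const_sub 1
  have h3 : HasDerivAt (fun s : ℝ => (s - 1) ^ 2 / 2) ((2 * (x - 1)) / 2) x := by
    have : HasDerivAt (fun s : ℝ => (s - 1)) 1 x := by
      simpa using (hasDerivAt_id x).sub_const 1
    simpa [mul_comm] using ((this.pow 2).div_const 2)
  have := (h1.fun_sub h2).fun_sub h3
  exact this.congr_deriv (by ring)

private lemma logA {s : ℝ} (hs0 : 0 < s) (hs1 : s ≤ 1) :
    (1 - s) + (s - 1) ^ 2 / 2 ≤ -Real.log s := by
  set f : ℝ → ℝ := fun s => -Real.log s - (1 - s) - (s - 1) ^ 2 / 2 with hf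
  have hanti : AntitoneOn f (Ioc (0:ℝ) 1) := by
    apply antitoneOn_of_deriv_nonpos (convex_Ioc (0:ℝ) 1)
    · apply ContinuousOn.sub
      apply ContinuousOn.sub
      · exact (Real.continuousOn_log.mono (by intro x hx; exact ne_of_gt hx.1)).neg
      · fun_prop
      · fun_prop
    · intro x hx
      rw [interior_Ioc] at hx
      exact (hasDerivA x hx.1).differentiableAt.differentiableWithinAt
    · intro x hx
      rw [interior_Ioc] at hx
      rw [(hasDerivA x hx.1).deriv]
      have hx0 := hx.1
      rw [show -x⁻¹ + 1 - (x - 1) = -((x - 1) ^ 2) / x by field_simp; ring]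
      apply div_nonpos_of_nonpos_of_nonneg
      · nlinarith [sq_nonneg (x - 1)]
      · exact hx0.le
  have h := hanti (show s ∈ Ioc (0:ℝ) 1 from ⟨hs0, hs1⟩)
      (show (1:ℝ) ∈ Ioc (0:ℝ) 1 by norm_num) hs1
  simp only [hf, Real.log_one] at h
  linarith

private lemma hasDerivB (x : ℝ) (hx : 0 < x) :
    HasDerivAt (fun s : ℝ => -Real.log s - (1 - s) - (s - 1) ^ 2 / (2 * s ^ 2))
      (-x⁻¹ + 1 - ((2 * (x - 1)) * (2 * x ^ 2) - (x - 1) ^ 2 * (4 * x)) / (2 * x ^ 2) ^ 2) x := by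
  have h1 : HasDerivAt (fun s : ℝ => -Real.log s) (-x⁻¹) x :=
    ((Real.hasDerivAt_log hx.ne').neg)
  have h2 : HasDerivAt (fun s : ℝ => (1 - s)) (-1) x := by
    simpa using (hasDerivAt_id x).const_sub 1
  have hnum : HasDerivAt (fun s : ℝ => (s - 1) ^ 2) (2 * (x - 1)) x := by
    have : HasDerivAt (fun s : ℝ => (s - 1)) 1 x := by
      simpa using (hasDerivAt_id x).sub_const 1
    simpa [mul_comm] using this.fun_pow 2
  have hden : HasDerivAt (fun s : ℝ => 2 * s ^ 2) (4 * x) x := by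
    have : HasDerivAt (fun s : ℝ => s ^ 2) (2 * x) x := by
      simpa [mul_comm] using (hasDerivAt_id x).fun_pow 2
    exact (this.const_mul 2).congr_deriv (by ring)
  have h3 := hnum.div hden (by positivity)
  have := (h1.fun_sub h2).fun_sub h3
  exact this.congr_deriv (by ring)

private lemma logB {s : ℝ} (hs1 : 1 ≤ s) :
    (1 - s) + (s - 1) ^ 2 / (2 * s ^ 2) ≤ -Real.log s := by
  set f : ℝ → ℝ := fun s => -Real.log s - (1 - s) - (s - 1) ^ 2 / (2 * s ^ 2) with hf
  have hmono : MonotoneOn f (Ici (1:ℝ)) := by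
    apply monotoneOn_of_deriv_nonneg (convex_Ici (1:ℝ))
    · apply ContinuousOn.sub
      apply ContinuousOn.sub
      · exact (Real.continuousOn_log.mono (by intro x hx; simp at hx ⊢; intro h; linarith)).neg
      · fun_prop
      · apply ContinuousOn.div
        · fun_prop
        · fun_prop
        · intro x hx
          have : (1:ℝ) ≤ x := hx
          positivity
    · intro x hx
      rw [interior_Ici] at hx
      have hx0 : (0:ℝ) < x := lt_trans one_pos hx
      exact (hasDerivB x hx0).differentiableAt.differentiableWithinAt
    · intro x hx
      rw [interior_Ici] at hx
      have hx0 : (0:ℝ) < x := lt_trans one_pos hx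
      rw [(hasDerivB x hx0).deriv]
      rw [show -x⁻¹ + 1 - ((2 * (x - 1)) * (2 * x ^ 2) - (x - 1) ^ 2 * (4 * x)) / (2 * x ^ 2) ^ 2
          = ((x - 1) ^ 2 * (x + 1)) / x ^ 3 by field_simp; ring]
      positivity
  have h := hmono (show (1:ℝ) ∈ Ici (1:ℝ) by norm_num)
      (show s ∈ Ici (1:ℝ) from hs1) hs1
  simp only [hf, Real.log_one] at h
  norm_num at h
  linarith

/-- For `λᵢ > 0` with `∑ λᵢ ≤ n`, one has `∑ (-log λᵢ) ≥ (1/(2n²)) ∑ (λᵢ - 1)²`. -/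
theorem stmt4 (n : ℕ) (hn : 0 < n) (lam : Fin n → ℝ) (hpos : ∀ i, 0 < lam i)
    (hsum : ∑ i, lam i ≤ (n : ℝ)) :
    (1 / (2 * (n : ℝ) ^ 2)) * ∑ i, (lam i - 1) ^ 2 ≤ ∑ i, (-Real.log (lam i)) := by
  have hn1 : (1:ℝ) ≤ (n:ℝ) := by exact_mod_cast hn
  have hle : ∀ i, lam i ≤ (n : ℝ) := by
    intro i
    calc lam i ≤ ∑ j, lam j :=
          Finset.single_le_sum (fun j _ => (hpos j).le) (Finset.mem_univ i)
      _ ≤ (n : ℝ) := hsum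
  have key : ∀ i, (1 - lam i) + (lam i - 1) ^ 2 / (2 * (n:ℝ) ^ 2) ≤ -Real.log (lam i) := by
    intro i
    rcases le_total (lam i) 1 with h | h
    · have := logA (hpos i) h
      have h2 : (lam i - 1) ^ 2 / (2 * (n:ℝ) ^ 2) ≤ (lam i - 1) ^ 2 / 2 := by
        apply div_le_div_of_nonneg_left (sq_nonneg _) (by norm_num)
        nlinarith
      linarith
    · have := logB h
      have h2 : (lam i - 1) ^ 2 / (2 * (n:ℝ) ^ 2) ≤ (lam i - 1) ^ 2 / (2 * (lam i) ^ 2) := by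
        apply div_le_div_of_nonneg_left (sq_nonneg _)
        · have := hpos i; positivity
        · have := hle i; nlinarith [hpos i]
      linarith
  have hsum2 : ∑ i, ((1 - lam i) + (lam i - 1) ^ 2 / (2 * (n:ℝ) ^ 2))
      ≤ ∑ i, (-Real.log (lam i)) := Finset.sum_le_sum fun i _ => key i
  rw [Finset.sum_add_distrib] at hsum2
  have h1 : (0:ℝ) ≤ ∑ i, (1 - lam i) := by
    rw [Finset.sum_sub_distrib]
    simp only [Finset.sum_const, Finset.card_univ, Fintype.card_fin, nsmul_eq_mul, mul_one]
    linarith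
  have h2 : ∑ i, (lam i - 1) ^ 2 / (2 * (n:ℝ) ^ 2)
      = (1 / (2 * (n : ℝ) ^ 2)) * ∑ i, (lam i - 1) ^ 2 := by
    rw [Finset.mul_sum]
    congr 1; ext i; ring
  rw [h2] at hsum2
  linarith
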